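/- (Theorem 1, inequality) Under the Markov chain X–Y–Z, the mixed information is upper bounded by the channel mutual information: I'(X;Z) ≤ I(X;Y). -/

import Mathlib

open Finset Real

theorem stmt2 {𝒳 𝒴 𝒵 : Type*} [Fintype 𝒳] [Fintype 𝒴] [Fintype 𝒵]
    [Nonempty 𝒳] [Nonempty 𝒴] [Nonempty 𝒵]
    (P : 𝒳 → 𝒴 → 𝒵 → ℝ)
    (hPnn : ∀ x y z, 0 ≤ P x y z)
    (hPsum : ∑ x, ∑ y, ∑ z, P x y z = 1)
    (PX : 𝒳 → ℝ) (hPX : ∀ x, PX x = ∑ y, ∑ z, P x y z)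
    (PY : 𝒴 → ℝ) (hPY : ∀ y, PY y = ∑ x, ∑ z, P x y z)
    (PZ : 𝒵 → ℝ) (hPZ : ∀ z, PZ z = ∑ x, ∑ y, P x y z)
    (PXY : 𝒳 → 𝒴 → ℝ) (hPXY : ∀ x y, PXY x y = ∑ z, P x y z)
    (PXZ : 𝒳 → 𝒵 → ℝ) (hPXZ : ∀ x z, PXZ x z = ∑ y, P x y z)
    (PYZ : 𝒴 → 𝒵 → ℝ) (hPYZ : ∀ y z, PYZ y z = ∑ x, P x y z)
    (hMarkov : ∀ x y z, P x y z * PY y = PXY x y * PYZ y z)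
    (Q : 𝒵 → 𝒳 → ℝ)
    (hQnn : ∀ z x, 0 ≤ Q z x)
    (hQsum : ∀ z, ∑ x, Q z x = 1)
    (hQpos : ∀ x z, 0 < PXZ x z → 0 < Q z x)
    : (∑ x, ∑ z, PXZ x z * logb 2 (Q z x / PX x)) ≤ (∑ x, ∑ y, PXY x y * logb 2 (PXY x y / (PX x * PY y))) := by
  -- basic bounds
  have hP_le_PXY : ∀ x y z, P x y z ≤ PXY x y := fun x y z => by
    rw [hPXY]; exact Finset.single_le_sum (fun z _ => hPnn x y z) (mem_univ z)
  have hP_le_PXZ : ∀ x y z, P x y z ≤ PXZ x z := fun x y z => by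
    rw [hPXZ]; exact Finset.single_le_sum (fun y _ => hPnn x y z) (mem_univ y)
  have hP_le_PYZ : ∀ x y z, P x y z ≤ PYZ y z := fun x y z => by
    rw [hPYZ]; exact Finset.single_le_sum (fun x _ => hPnn x y z) (mem_univ x)
  have hP_le_PX : ∀ x y z, P x y z ≤ PX x := fun x y z => by
    rw [hPX]
    calc P x y z ≤ ∑ z, P x y z := Finset.single_le_sum (fun z _ => hPnn x y z) (mem_univ z)
      _ ≤ ∑ y, ∑ z, P x y z := Finset.single_le_sum (fun y _ => Finset.sum_nonneg fun z _ => hPnn x y z) (mem_univ y)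
  have hP_le_PY : ∀ x y z, P x y z ≤ PY y := fun x y z => by
    rw [hPY]
    calc P x y z ≤ ∑ z, P x y z := Finset.single_le_sum (fun z _ => hPnn x y z) (mem_univ z)
      _ ≤ ∑ x, ∑ z, P x y z := Finset.single_le_sum (fun x _ => Finset.sum_nonneg fun z _ => hPnn x y z) (mem_univ x)
  -- rewrite LHS as triple sum
  have hL : (∑ x, ∑ z, PXZ x z * logb 2 (Q z x / PX x))
      = ∑ y, ∑ z, ∑ x, P x y z * logb 2 (Q z x / PX x) := by
    calc (∑ x, ∑ z, PXZ x z * logb 2 (Q z x / PX x))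
        = ∑ x, ∑ z, ∑ y, P x y z * logb 2 (Q z x / PX x) := by
          refine Finset.sum_congr rfl fun x _ => Finset.sum_congr rfl fun z _ => ?_
          rw [hPXZ, Finset.sum_mul]
      _ = ∑ z, ∑ x, ∑ y, P x y z * logb 2 (Q z x / PX x) := Finset.sum_comm
      _ = ∑ z, ∑ y, ∑ x, P x y z * logb 2 (Q z x / PX x) :=
          Finset.sum_congr rfl fun z _ => Finset.sum_comm
      _ = ∑ y, ∑ z, ∑ x, P x y z * logb 2 (Q z x / PX x) := Finset.sum_comm
  have hR : (∑ x, ∑ y, PXY x y * logb 2 (PXY x y / (PX x * PY y)))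
      = ∑ y, ∑ z, ∑ x, P x y z * logb 2 (PXY x y / (PX x * PY y)) := by
    calc (∑ x, ∑ y, PXY x y * logb 2 (PXY x y / (PX x * PY y)))
        = ∑ x, ∑ y, ∑ z, P x y z * logb 2 (PXY x y / (PX x * PY y)) := by
          refine Finset.sum_congr rfl fun x _ => Finset.sum_congr rfl fun y _ => ?_
          rw [hPXY, Finset.sum_mul]
      _ = ∑ y, ∑ x, ∑ z, P x y z * logb 2 (PXY x y / (PX x * PY y)) := Finset.sum_comm
      _ = ∑ y, ∑ z, ∑ x, P x y z * logb 2 (PXY x y / (PX x * PY y)) :=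
          Finset.sum_congr rfl fun y _ => Finset.sum_comm
  rw [hL, hR]
  refine Finset.sum_le_sum fun y _ => Finset.sum_le_sum fun z _ => ?_
  -- fixed y z
  rw [← sub_nonneg, ← Finset.sum_sub_distrib]
  have hdiff : ∀ x, P x y z * logb 2 (PXY x y / (PX x * PY y)) - P x y z * logb 2 (Q z x / PX x)
      = P x y z * logb 2 (P x y z / (PYZ y z * Q z x)) := by
    intro x
    rcases eq_or_lt_of_le (hPnn x y z) with h | h
    · rw [← h]; ring
    · have hPXYp : 0 < PXY x y := lt_of_lt_of_le h (hP_le_PXY x y z)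
      have hPXZp : 0 < PXZ x z := lt_of_lt_of_le h (hP_le_PXZ x y z)
      have hPYZp : 0 < PYZ y z := lt_of_lt_of_le h (hP_le_PYZ x y z)
      have hPXp : 0 < PX x := lt_of_lt_of_le h (hP_le_PX x y z)
      have hPYp : 0 < PY y := lt_of_lt_of_le h (hP_le_PY x y z)
      have hQp : 0 < Q z x := hQpos x z hPXZp
      rw [← mul_sub, ← Real.logb_div (by positivity) (by positivity)]
      congr 2
      have hM := hMarkov x y z
      field_simp
      linear_combination (-1) * hM
  rw [Finset.sum_congr rfl fun x _ => hdiff x]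
  -- Gibbs
  have hsum : ∑ x, (PYZ y z * Q z x) ≤ ∑ x, P x y z := by
    rw [← Finset.mul_sum, hQsum, mul_one, hPYZ]
  -- inline gibbs
  have key : ∀ x, P x y z - PYZ y z * Q z x ≤ P x y z * Real.log (P x y z / (PYZ y z * Q z x)) := by
    intro x
    rcases eq_or_lt_of_le (hPnn x y z) with h | h
    · simp [← h]
      exact mul_nonneg (le_trans (hPnn x y z) (hP_le_PYZ x y z)) (hQnn z x)
    · have hPYZp : 0 < PYZ y z := lt_of_lt_of_le h (hP_le_PYZ x y z)
      have hQp : 0 < Q z x := hQpos x z (lt_of_lt_of_le h (hP_le_PXZ x y z))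
      set g := PYZ y z * Q z x with hg
      have hgp : 0 < g := by positivity
      have h1 : Real.log (g / P x y z) ≤ g / P x y z - 1 :=
        Real.log_le_sub_one_of_pos (by positivity)
      have h2 : Real.log (P x y z / g) = - Real.log (g / P x y z) := by
        rw [← Real.log_inv]; congr 1; field_simp
      rw [h2]
      have h3 : P x y z * (g / P x y z - 1) = g - P x y z := by field_simp
      nlinarith [mul_le_mul_of_nonneg_left h1 h.le]
  have hlog : 0 ≤ ∑ x, P x y z * Real.log (P x y z / (PYZ y z * Q z x)) := by
    calc (0:ℝ) ≤ ∑ x, (P x y z - PYZ y z * Q z x) := by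
          rw [Finset.sum_sub_distrib]; linarith
      _ ≤ _ := Finset.sum_le_sum fun x _ => key x
  have heq : ∑ x, P x y z * logb 2 (P x y z / (PYZ y z * Q z x))
      = (∑ x, P x y z * Real.log (P x y z / (PYZ y z * Q z x))) / Real.log 2 := by
    rw [Finset.sum_div]
    refine Finset.sum_congr rfl fun x _ => ?_
    rw [Real.logb, mul_div_assoc]
  rw [heq]
  positivity
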